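/- Let t ≥ 0 and real numbers a1, a2, a3, b1, b2, b3, λ, μ with λ > 0, λ + 2tμ > 0, a1 > 0, a2 > 0, a1+2t·b1 > 0, a2+2t·b2 > 0, a1·a2 = 1+a3², and (a1+2t·b1)(a2+2t·b2) = 1+(a3+2t·b3)². Define c_i = λ·a_i, d_i = λ·b_i + μ·(a_i+2t·b_i). Then c1 + 2t·d1 > 0, c2 + 2t·d2 > 0, and (c1+2t·d1)(c2+2t·d2) − (c3+2t·d3)² > 0, i.e., the metric G defined by these coefficients is positive definite. -/
import Mathlib

theorem stmt_12 (t a1 a2 a3 b1 b2 b3 lam mu : ℝ) (ht : 0 ≤ t)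
    (hlam : 0 < lam) (hlm : 0 < lam + 2 * t * mu)
    (ha1 : 0 < a1) (ha2 : 0 < a2)
    (hb1 : 0 < a1 + 2 * t * b1) (hb2 : 0 < a2 + 2 * t * b2)
    (halg1 : a1 * a2 = 1 + a3 ^ 2)
    (halg2 : (a1 + 2 * t * b1) * (a2 + 2 * t * b2) = 1 + (a3 + 2 * t * b3) ^ 2)
    (c1 c2 c3 d1 d2 d3 : ℝ)
    (hc1 : c1 = lam * a1) (hc2 : c2 = lam * a2) (hc3 : c3 = lam * a3)
    (hd1 : d1 = lam * b1 + mu * (a1 + 2 * t * b1))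
    (hd2 : d2 = lam * b2 + mu * (a2 + 2 * t * b2))
    (hd3 : d3 = lam * b3 + mu * (a3 + 2 * t * b3)) :
    0 < c1 + 2 * t * d1 ∧ 0 < c2 + 2 * t * d2 ∧
    0 < (c1 + 2 * t * d1) * (c2 + 2 * t * d2) - (c3 + 2 * t * d3) ^ 2 := by
  have e1 : c1 + 2 * t * d1 = (lam + 2 * t * mu) * (a1 + 2 * t * b1) := by
    subst hc1 hd1; ring
  have e2 : c2 + 2 * t * d2 = (lam + 2 * t * mu) * (a2 + 2 * t * b2) := by
    subst hc2 hd2; ring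
  have e3 : c3 + 2 * t * d3 = (lam + 2 * t * mu) * (a3 + 2 * t * b3) := by
    subst hc3 hd3; ring
  refine ⟨by rw [e1]; positivity, by rw [e2]; positivity, ?_⟩
  have : (c1 + 2 * t * d1) * (c2 + 2 * t * d2) - (c3 + 2 * t * d3) ^ 2
      = (lam + 2 * t * mu) ^ 2 := by
    rw [e1, e2, e3]
    nlinarith [halg2]
  rw [this]; positivity
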